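/- Let K be a compact subset of ℝⁿ and let f : K → ℝ and G : K → ℝⁿ be continuous functions. Then there exists a convex function F ∈ C¹(ℝⁿ) such that F = f on K and ∇F = G on K if and only if the 1-jet (f, G) satisfies: (C) f(x) ≥ f(y) + ⟨G(y), x − y⟩ for all x, y ∈ K, and (CW¹) whenever x, y ∈ K and f(x) = f(y) + ⟨G(y), x − y⟩, then G(x) = G(y). -/

import Mathlib

open Set

local notation "⟪" x ", " y "⟫" => @inner ℝ _ _ x y

section AuxiliaryLemmas

open InnerProductSpace

variable {E : Type*} [NormedAddCommGroup E] [InnerProductSpace ℝ E]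

section Fwd

variable [CompleteSpace E]

/-- Gradient inequality for a differentiable convex function. -/
lemma convex_grad_ineq {F : E → ℝ} (hF : ConvexOn ℝ univ F) (hd : Differentiable ℝ F)
    (a b : E) : F a + ⟪gradient F a, b - a⟫ ≤ F b := by
  rcases eq_or_ne b a with rfl | hba
  · simp
  · set v := b - a with hv
    set φ : ℝ → ℝ := fun t => F (a + t • v) with hφ
    have hconv : ConvexOn ℝ univ φ := by
      have := hF.comp_affineMap (AffineMap.lineMap a b : ℝ →ᵃ[ℝ] E)
      have h2 := this.subset (subset_preimage_univ) (convex_univ)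
      have : (F ∘ (AffineMap.lineMap a b : ℝ →ᵃ[ℝ] E)) = φ := by
        funext t
        simp [φ, AffineMap.lineMap_apply, hv]
        rw [add_comm]
      rwa [this] at h2
    have hderiv : HasDerivAt φ ⟪gradient F a, v⟫ 0 := by
      have hc : HasDerivAt (fun t : ℝ => a + t • v) v 0 := by
        simpa using ((hasDerivAt_id (0:ℝ)).smul_const v).const_add a
      have hFa : HasFDerivAt F (InnerProductSpace.toDual ℝ E (gradient F a)) a :=
        (hd a).hasGradientAt.hasFDerivAt
      have hFa' : HasFDerivAt F (InnerProductSpace.toDual ℝ E (gradient F a)) (a + (0:ℝ) • v) := by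
        simpa using hFa
      have := hFa'.comp_hasDerivAt (x := (0:ℝ)) hc
      simpa [InnerProductSpace.toDual_apply_apply, φ, Function.comp_def] using this
    have h01 : (0:ℝ) < 1 := one_pos
    have := hconv.le_slope_of_hasDerivAt (mem_univ 0) (mem_univ 1) h01 hderiv
    have hslope : slope φ 0 1 = F b - F a := by
      simp [slope, φ, hv]
    rw [hslope] at this
    linarith
/-- If a differentiable function has `p` as global subgradient at `x`, its gradient at `x` is `p`. -/
lemma grad_eq_of_subgradient {F : E → ℝ} (hd : Differentiable ℝ F) {x : E} {p : E}
    (h : ∀ z, F x + ⟪p, z - x⟫ ≤ F z) : gradient F x = p := by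
  set ψ : E → ℝ := fun z => F z - ⟪p, z⟫ with hψ
  have hmin : IsLocalMin ψ x := by
    apply Filter.Eventually.of_forall
    intro z
    have := h z
    simp only [ψ]
    have : ⟪p, z - x⟫ = ⟪p, z⟫ - ⟪p, x⟫ := by rw [inner_sub_right]
    nlinarith [h z, this]
  have hFd : HasFDerivAt F (fderiv ℝ F x) x := (hd x).hasFDerivAt
  have hinner : HasFDerivAt (fun z : E => ⟪p, z⟫) (innerSL ℝ p) x :=
    (innerSL ℝ p).hasFDerivAt
  have hψd : HasFDerivAt ψ (fderiv ℝ F x - innerSL ℝ p) x := hFd.sub hinner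
  have h0 := hmin.hasFDerivAt_eq_zero hψd
  have hfd : fderiv ℝ F x = innerSL ℝ p := by
    rwa [sub_eq_zero] at h0
  have : HasGradientAt F p x := by
    rw [hasGradientAt_iff_hasFDerivAt]
    have hpd : InnerProductSpace.toDual ℝ E p = fderiv ℝ F x := by
      rw [hfd]; ext v; simp [InnerProductSpace.toDual_apply_apply]
    rw [hpd]; exact hFd
  exact this.gradient

end Fwd

section Rev

variable [FiniteDimensional ℝ E]

lemma comb_norm_sq (u v : E) (t : ℝ) :
    ‖t • u + (1 - t) • v‖ ^ 2
      = t * ‖u‖ ^ 2 + (1 - t) * ‖v‖ ^ 2 - t * (1 - t) * ‖u - v‖ ^ 2 := by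
  have h1 := norm_add_sq_real (t • u) ((1 - t) • v)
  have h2 := norm_sub_sq_real u v
  have h3 : ‖t • u‖ ^ 2 = t ^ 2 * ‖u‖ ^ 2 := by
    rw [norm_smul, mul_pow, Real.norm_eq_abs, sq_abs]
  have h4 : ‖(1 - t) • v‖ ^ 2 = (1 - t) ^ 2 * ‖v‖ ^ 2 := by
    rw [norm_smul, mul_pow, Real.norm_eq_abs, sq_abs]
  have h5 : ⟪t • u, (1 - t) • v⟫ = t * ((1 - t) * ⟪u, v⟫) := by
    rw [real_inner_smul_left, real_inner_smul_right]
  rw [h1, h3, h4, h5, h2]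
  ring

set_option maxHeartbeats 4000000 in
theorem reverse_dir (K : Set E) (hK : IsCompact K) (f : E → ℝ) (G : E → E)
    (hf : ContinuousOn f K) (hG : ContinuousOn G K)
    (hC : ∀ x ∈ K, ∀ y ∈ K, f x ≥ f y + ⟪G y, x - y⟫)
    (hCW : ∀ x ∈ K, ∀ y ∈ K, f x = f y + ⟪G y, x - y⟫ → G x = G y) :
    ∃ F : E → ℝ, ConvexOn ℝ univ F ∧ ContDiff ℝ 1 F ∧
      (∀ x ∈ K, F x = f x) ∧ (∀ x ∈ K, gradient F x = G x) := by
  rcases K.eq_empty_or_nonempty with rfl | hKne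
  · exact ⟨fun _ => 0, convexOn_const 0 convex_univ, contDiff_const,
      fun x hx => absurd hx (notMem_empty x), fun x hx => absurd hx (notMem_empty x)⟩
  -- bounds
  obtain ⟨M₀, hM₀⟩ : ∃ M₀, ∀ y ∈ K, ‖G y‖ ≤ M₀ := by
    obtain ⟨M₀, hM₀⟩ := hK.exists_bound_of_continuousOn hG
    exact ⟨M₀, hM₀⟩
  set M : ℝ := max M₀ 0 + 1 with hM_def
  have hMpos : 0 < M := by positivity
  have hGM : ∀ y ∈ K, ‖G y‖ ≤ M := fun y hy =>
    (hM₀ y hy).trans (by simp [hM_def]; nlinarith [le_max_left M₀ (0:ℝ)])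
  obtain ⟨N₀, hN₀⟩ : ∃ N₀, ∀ y ∈ K, ‖y‖ ≤ N₀ := by
    obtain ⟨N₀, hN₀⟩ := hK.exists_bound_of_continuousOn continuousOn_id
    exact ⟨N₀, fun y hy => hN₀ y hy⟩
  set N : ℝ := max N₀ 0 with hN_def
  have hNnonneg : 0 ≤ N := le_max_right _ _
  have hNy : ∀ y ∈ K, ‖y‖ ≤ N := fun y hy => (hN₀ y hy).trans (le_max_left _ _)
  set R : ℝ := 4 * M ^ 2 + 1 with hR_def
  have hRpos : 0 < R := by positivity
  -- the defect function b
  set b : E × E → ℝ := fun p => f p.1 - f p.2 - ⟪G p.2, p.1 - p.2⟫ with hb_def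
  have hb0 : ∀ p ∈ K ×ˢ K, 0 ≤ b p := by
    rintro ⟨x, y⟩ ⟨hx, hy⟩
    have := hC x hx y hy
    simp only [hb_def]
    linarith
  have hbeq : ∀ p ∈ K ×ˢ K, b p = 0 → G p.1 = G p.2 := by
    rintro ⟨x, y⟩ ⟨hx, hy⟩ h
    refine hCW x hx y hy ?_
    simp only [hb_def] at h
    linarith
  have hbcont : ContinuousOn b (K ×ˢ K) := by
    have h1 : ContinuousOn (fun p : E × E => f p.1) (K ×ˢ K) :=
      hf.comp continuous_fst.continuousOn (fun p hp => hp.1)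
    have h2 : ContinuousOn (fun p : E × E => f p.2) (K ×ˢ K) :=
      hf.comp continuous_snd.continuousOn (fun p hp => hp.2)
    have h3 : ContinuousOn (fun p : E × E => ⟪G p.2, p.1 - p.2⟫) (K ×ˢ K) :=
      (hG.comp continuous_snd.continuousOn (fun p hp => hp.2)).inner
        (continuous_fst.sub continuous_snd).continuousOn
    exact (h1.sub h2).sub h3
  -- the sets S s
  set S : ℝ → Set (E × E) := fun s => (K ×ˢ K) ∩ {p | s ≤ ‖G p.1 - G p.2‖ ^ 2} with hS_def
  have hφcont : ContinuousOn (fun p : E × E => ‖G p.1 - G p.2‖ ^ 2) (K ×ˢ K) :=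
    (((hG.comp continuous_fst.continuousOn (fun p hp => hp.1)).sub
      (hG.comp continuous_snd.continuousOn (fun p hp => hp.2))).norm).pow 2
  have hSclosed : ∀ s, IsClosed (S s) := by
    intro s
    have : S s = (K ×ˢ K) ∩ (fun p : E × E => ‖G p.1 - G p.2‖ ^ 2) ⁻¹' (Ici s) := by
      ext p; simp [hS_def, Set.mem_preimage]
    rw [this]
    exact hφcont.preimage_isClosed_of_isClosed (hK.prod hK).isClosed isClosed_Ici
  have hScompact : ∀ s, IsCompact (S s) :=
    fun s => (hK.prod hK).of_isClosed_subset (hSclosed s) inter_subset_left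
  -- the modulus ω
  set ω : ℝ → ℝ := fun s => sInf (insert 1 (b '' S s)) with hω_def
  have hωbdd : ∀ s, BddBelow (insert 1 (b '' S s)) := by
    intro s
    refine ⟨0, ?_⟩
    rintro t (rfl | ⟨p, hp, rfl⟩)
    · norm_num
    · exact hb0 p hp.1
  have hωnonneg : ∀ s, 0 ≤ ω s := by
    intro s
    refine le_csInf (insert_nonempty _ _) ?_
    rintro t (rfl | ⟨p, hp, rfl⟩)
    · norm_num
    · exact hb0 p hp.1
  have hωle1 : ∀ s, ω s ≤ 1 := fun s => csInf_le (hωbdd s) (mem_insert _ _)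
  have hωmono : Monotone ω := by
    intro s s' hss'
    refine csInf_le_csInf (hωbdd s) (insert_nonempty _ _) ?_
    rintro t (rfl | ⟨p, hp, rfl⟩)
    · exact mem_insert _ _
    · exact mem_insert_of_mem _ ⟨p, ⟨hp.1, le_trans hss' hp.2⟩, rfl⟩
  have hωpos : ∀ s, 0 < s → 0 < ω s := by
    intro s hs
    rcases (S s).eq_empty_or_nonempty with hSe | hSne
    · have : ω s = 1 := by simp [hω_def, hSe]
      rw [this]; norm_num
    · obtain ⟨p₀, hp₀, hp₀min⟩ := (hScompact s).exists_isMinOn hSne (hbcont.mono inter_subset_left)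
      have hbp₀ : 0 < b p₀ := by
        rcases lt_or_eq_of_le (hb0 p₀ hp₀.1) with h | h
        · exact h
        · exfalso
          have hGp := hbeq p₀ hp₀.1 h.symm
          have h2 : s ≤ ‖G p₀.1 - G p₀.2‖ ^ 2 := hp₀.2
          rw [hGp] at h2
          simp only [sub_self, norm_zero] at h2
          nlinarith
      have : min 1 (b p₀) ≤ ω s := by
        refine le_csInf (insert_nonempty _ _) ?_
        rintro t (rfl | ⟨p, hp, rfl⟩)
        · exact min_le_left _ _
        · exact le_trans (min_le_right _ _) (hp₀min hp)
      exact lt_of_lt_of_le (lt_min one_pos hbp₀) this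
  have hωle : ∀ x ∈ K, ∀ y ∈ K, ∀ s, s ≤ ‖G y - G x‖ ^ 2 → ω s ≤ b (y, x) := by
    intro x hx y hy s hs
    exact csInf_le (hωbdd s) (mem_insert_of_mem _ ⟨(y, x), ⟨⟨hy, hx⟩, hs⟩, rfl⟩)
  have hωint : ∀ a c : ℝ, IntervalIntegrable ω MeasureTheory.volume a c :=
    fun a c => hωmono.intervalIntegrable
  -- the primitive w
  set w : ℝ → ℝ := fun s => (1 / R) * ∫ t in (0:ℝ)..s, ω t with hw_def
  have hw0 : w 0 = 0 := by simp [hw_def]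
  have hwnonneg : ∀ s, 0 ≤ s → 0 ≤ w s := by
    intro s hs
    have : 0 ≤ ∫ t in (0:ℝ)..s, ω t :=
      intervalIntegral.integral_nonneg hs (fun t _ => hωnonneg t)
    positivity
  have hwadd : ∀ a c : ℝ, w c - w a = (1 / R) * ∫ t in a..c, ω t := by
    intro a c
    have := intervalIntegral.integral_add_adjacent_intervals (hωint 0 a) (hωint a c)
    simp only [hw_def]
    rw [← this]
    ring
  have hwmono : ∀ a c : ℝ, a ≤ c → w a ≤ w c := by
    intro a c hac
    have h1 : 0 ≤ ∫ t in a..c, ω t :=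
      intervalIntegral.integral_nonneg hac (fun t _ => hωnonneg t)
    have := hwadd a c
    nlinarith [one_div_pos.2 hRpos]
  have hwstrict : ∀ a c : ℝ, 0 ≤ a → a < c → w a < w c := by
    intro a c ha hac
    set m : ℝ := (a + c) / 2 with hm_def
    have hm1 : a < m := by simp [hm_def]; linarith
    have hm2 : m < c := by simp [hm_def]; linarith
    have hmpos : 0 < m := lt_of_le_of_lt ha hm1
    have h1 : 0 ≤ ∫ t in a..m, ω t :=
      intervalIntegral.integral_nonneg hm1.le (fun t _ => hωnonneg t)
    have h2 : (c - m) * ω m ≤ ∫ t in m..c, ω t := by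
      have := intervalIntegral.integral_mono_on (f := fun _ => ω m) (g := ω) hm2.le
        intervalIntegrable_const (hωint m c) (fun t ht => hωmono ht.1)
      simpa using this
    have h3 : (∫ t in a..c, ω t) = (∫ t in a..m, ω t) + ∫ t in m..c, ω t :=
      (intervalIntegral.integral_add_adjacent_intervals (hωint a m) (hωint m c)).symm
    have h4 : 0 < (c - m) * ω m := by
      have := hωpos m hmpos
      nlinarith
    have h5 : 0 < ∫ t in a..c, ω t := by rw [h3]; nlinarith
    have := hwadd a c
    nlinarith [one_div_pos.2 hRpos]
  -- convexity inequality for w on [0,∞)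
  have hwconvex_aux : ∀ q₁ q₂ t : ℝ, 0 ≤ q₁ → 0 ≤ t → t ≤ 1 → q₁ ≤ q₂ →
      w (t * q₁ + (1 - t) * q₂) ≤ t * w q₁ + (1 - t) * w q₂ := by
    intro q₁ q₂ t hq₁ ht0 ht1 h12
    set s0 : ℝ := t * q₁ + (1 - t) * q₂ with hs0_def
    have hs1 : q₁ ≤ s0 := by nlinarith
    have hs2 : s0 ≤ q₂ := by nlinarith
    have h1t : (0:ℝ) ≤ 1 - t := by linarith
    have hA : w s0 - w q₁ ≤ (1 / R) * ((s0 - q₁) * ω s0) := by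
      have hint := intervalIntegral.integral_mono_on (f := ω) (g := fun _ => ω s0) hs1
        (hωint q₁ s0) intervalIntegrable_const (fun u hu => hωmono hu.2)
      simp only [intervalIntegral.integral_const, smul_eq_mul] at hint
      rw [hwadd q₁ s0]
      exact mul_le_mul_of_nonneg_left hint (by positivity)
    have hB : (1 / R) * ((q₂ - s0) * ω s0) ≤ w q₂ - w s0 := by
      have hint := intervalIntegral.integral_mono_on (f := fun _ => ω s0) (g := ω) hs2
        intervalIntegrable_const (hωint s0 q₂) (fun u hu => hωmono hu.1)
      simp only [intervalIntegral.integral_const, smul_eq_mul] at hint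
      rw [hwadd s0 q₂]
      exact mul_le_mul_of_nonneg_left hint (by positivity)
    have hA' := mul_le_mul_of_nonneg_left hA ht0
    have hB' := mul_le_mul_of_nonneg_left hB h1t
    have key : t * ((1 / R) * ((s0 - q₁) * ω s0)) = (1 - t) * ((1 / R) * ((q₂ - s0) * ω s0)) := by
      rw [hs0_def]; ring
    nlinarith [hA', hB']
  have hwconvex : ∀ q₁ q₂ t : ℝ, 0 ≤ q₁ → 0 ≤ q₂ → 0 ≤ t → t ≤ 1 →
      w (t * q₁ + (1 - t) * q₂) ≤ t * w q₁ + (1 - t) * w q₂ := by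
    intro q₁ q₂ t hq₁ hq₂ ht0 ht1
    rcases le_total q₁ q₂ with h12 | h12
    · exact hwconvex_aux q₁ q₂ t hq₁ ht0 ht1 h12
    · have := hwconvex_aux q₂ q₁ (1 - t) hq₂ (by linarith) (by linarith) h12
      have he : (1 - t) * q₂ + (1 - (1 - t)) * q₁ = t * q₁ + (1 - t) * q₂ := by ring
      rw [he] at this
      linarith
  -- w ≤ ω on [0, R]
  have hwle : ∀ s, 0 ≤ s → s ≤ R → w s ≤ ω s := by
    intro s hs hsR
    have hint := intervalIntegral.integral_mono_on (f := ω) (g := fun _ => ω s) hs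
      (hωint 0 s) intervalIntegrable_const (fun u hu => hωmono hu.2)
    simp only [intervalIntegral.integral_const, smul_eq_mul, sub_zero] at hint
    have h1 : w s ≤ (1 / R) * (s * ω s) := by
      simp only [hw_def]
      exact mul_le_mul_of_nonneg_left hint (by positivity)
    have h2 : (1 / R) * (s * ω s) ≤ ω s := by
      rw [div_mul_eq_mul_div, one_mul, div_le_iff₀ hRpos]
      nlinarith [hωnonneg s]
    linarith
  -- Lipschitz bound for w
  have hwlip : ∀ s s' : ℝ, |w s - w s'| ≤ |s - s'| / R := by
    intro s s'
    have h1 : ‖∫ t in s'..s, ω t‖ ≤ 1 * |s - s'| := by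
      apply intervalIntegral.norm_integral_le_of_norm_le_const
      intro u hu
      rw [Real.norm_eq_abs, abs_le]
      exact ⟨by linarith [hωnonneg u], hωle1 u⟩
    have h2 := hwadd s' s
    rw [Real.norm_eq_abs] at h1
    rw [h2]
    calc |1 / R * ∫ t in s'..s, ω t| = (1 / R) * |∫ t in s'..s, ω t| := by
          rw [abs_mul, abs_of_pos (by positivity : (0:ℝ) < 1 / R)]
      _ ≤ (1 / R) * (1 * |s - s'|) := mul_le_mul_of_nonneg_left h1 (by positivity)
      _ = |s - s'| / R := by ring
  -- the family g and its upper envelope ψ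
  set g : E → E → ℝ := fun y ξ => ⟪ξ, y⟫ - f y + w (‖ξ - G y‖ ^ 2) with hg_def
  have hwcont : Continuous w := by
    rw [Metric.continuous_iff]
    intro s ε hε
    refine ⟨ε * R, by positivity, fun s' hs' => ?_⟩
    rw [Real.dist_eq] at *
    have := hwlip s' s
    have h2 : |s' - s| / R < ε := by rw [div_lt_iff₀ hRpos]; linarith
    linarith
  have hgcont : ∀ ξ : E, ContinuousOn (fun y => g y ξ) K := by
    intro ξ
    refine ContinuousOn.add (ContinuousOn.sub ?_ hf) ?_
    · exact (continuous_const.inner continuous_id).continuousOn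
    · exact hwcont.comp_continuousOn (((continuousOn_const.sub hG).norm).pow 2)
  have hψatt : ∀ ξ : E, ∃ y₀ ∈ K, (∀ y ∈ K, g y ξ ≤ g y₀ ξ) ∧
      sSup ((fun y => g y ξ) '' K) = g y₀ ξ := by
    intro ξ
    obtain ⟨y₀, hy₀K, hy₀max⟩ := hK.exists_isMaxOn hKne (hgcont ξ)
    have hmax : ∀ y ∈ K, g y ξ ≤ g y₀ ξ := fun y hy => hy₀max hy
    refine ⟨y₀, hy₀K, hmax, ?_⟩
    apply IsGreatest.csSup_eq
    exact ⟨mem_image_of_mem _ hy₀K, by rintro r ⟨y, hy, rfl⟩; exact hmax y hy⟩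
  set ψ : E → ℝ := fun ξ => sSup ((fun y => g y ξ) '' K) with hψ_def
  have hψge : ∀ ξ : E, ∀ y ∈ K, g y ξ ≤ ψ ξ := by
    intro ξ y hy
    obtain ⟨y₀, hy₀K, hmax, heq⟩ := hψatt ξ
    simp only [hψ_def]
    rw [heq]
    exact hmax y hy
  have hψub : ∀ (ξ : E) (c : ℝ), (∀ y ∈ K, g y ξ ≤ c) → ψ ξ ≤ c := by
    intro ξ c h
    obtain ⟨y₀, hy₀K, hmax, heq⟩ := hψatt ξ
    simp only [hψ_def]
    rw [heq]
    exact h y₀ hy₀K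
  -- strict convexity of ψ
  have hψstrict : ∀ ξ₁ ξ₂ : E, ξ₁ ≠ ξ₂ → ∀ t : ℝ, 0 < t → t < 1 →
      ψ (t • ξ₁ + (1 - t) • ξ₂) < t * ψ ξ₁ + (1 - t) * ψ ξ₂ := by
    intro ξ₁ ξ₂ hne t ht0 ht1
    obtain ⟨y₀, hy₀K, hmax, heq⟩ := hψatt (t • ξ₁ + (1 - t) • ξ₂)
    have huv : t • ξ₁ + (1 - t) • ξ₂ - G y₀ = t • (ξ₁ - G y₀) + (1 - t) • (ξ₂ - G y₀) := by
      module
    have hids := comb_norm_sq (ξ₁ - G y₀) (ξ₂ - G y₀) t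
    have huv2 : ξ₁ - G y₀ - (ξ₂ - G y₀) = ξ₁ - ξ₂ := by abel
    have hpos : 0 < ‖ξ₁ - ξ₂‖ ^ 2 := pow_pos (norm_pos_iff.2 (sub_ne_zero.2 hne)) 2
    have ht1' : (0:ℝ) < 1 - t := by linarith
    have hlt : ‖t • (ξ₁ - G y₀) + (1 - t) • (ξ₂ - G y₀)‖ ^ 2
        < t * ‖ξ₁ - G y₀‖ ^ 2 + (1 - t) * ‖ξ₂ - G y₀‖ ^ 2 := by
      rw [hids, huv2]
      nlinarith [mul_pos (mul_pos ht0 ht1') hpos]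
    have hw1 : w (‖t • (ξ₁ - G y₀) + (1 - t) • (ξ₂ - G y₀)‖ ^ 2)
        < w (t * ‖ξ₁ - G y₀‖ ^ 2 + (1 - t) * ‖ξ₂ - G y₀‖ ^ 2) :=
      hwstrict _ _ (by positivity) hlt
    have hw2 : w (t * ‖ξ₁ - G y₀‖ ^ 2 + (1 - t) * ‖ξ₂ - G y₀‖ ^ 2)
        ≤ t * w (‖ξ₁ - G y₀‖ ^ 2) + (1 - t) * w (‖ξ₂ - G y₀‖ ^ 2) :=
      hwconvex _ _ t (by positivity) (by positivity) ht0.le ht1.le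
    have hin : ⟪t • ξ₁ + (1 - t) • ξ₂, y₀⟫ = t * ⟪ξ₁, y₀⟫ + (1 - t) * ⟪ξ₂, y₀⟫ := by
      rw [inner_add_left, real_inner_smul_left, real_inner_smul_left]
    have hg1 : g y₀ ξ₁ ≤ ψ ξ₁ := hψge ξ₁ y₀ hy₀K
    have hg2 : g y₀ ξ₂ ≤ ψ ξ₂ := hψge ξ₂ y₀ hy₀K
    have hgmid : g y₀ (t • ξ₁ + (1 - t) • ξ₂) < t * g y₀ ξ₁ + (1 - t) * g y₀ ξ₂ := by
      simp only [hg_def]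
      rw [huv, hin]
      nlinarith [hw1, hw2]
    have hmid : ψ (t • ξ₁ + (1 - t) • ξ₂) = g y₀ (t • ξ₁ + (1 - t) • ξ₂) := heq
    rw [hmid]
    have e1 : t * g y₀ ξ₁ ≤ t * ψ ξ₁ := mul_le_mul_of_nonneg_left hg1 ht0.le
    have e2 : (1 - t) * g y₀ ξ₂ ≤ (1 - t) * ψ ξ₂ :=
      mul_le_mul_of_nonneg_left hg2 (by linarith)
    linarith
  -- value of ψ on G(K)
  have hψG : ∀ x ∈ K, ψ (G x) = ⟪G x, x⟫ - f x := by
    intro x hx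
    apply le_antisymm
    · apply hψub
      intro y hy
      have hr : ‖G x - G y‖ ^ 2 ≤ R := by
        have h1 : ‖G x - G y‖ ≤ 2 * M := by
          calc ‖G x - G y‖ ≤ ‖G x‖ + ‖G y‖ := norm_sub_le _ _
            _ ≤ 2 * M := by linarith [hGM x hx, hGM y hy]
        rw [hR_def]
        nlinarith [norm_nonneg (G x - G y)]
      have h2 : w (‖G x - G y‖ ^ 2) ≤ ω (‖G x - G y‖ ^ 2) := hwle _ (by positivity) hr
      have h3 : ω (‖G x - G y‖ ^ 2) ≤ b (y, x) :=
        hωle x hx y hy _ (le_of_eq (by rw [norm_sub_rev]))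
      simp only [hg_def]
      simp only [hb_def] at h3
      have hinner : ⟪G x, y - x⟫ = ⟪G x, y⟫ - ⟪G x, x⟫ := inner_sub_right _ _ _
      rw [hinner] at h3
      linarith
    · have h := hψge (G x) x hx
      simp only [hg_def, sub_self, norm_zero] at h
      rw [zero_pow (by norm_num), hw0] at h
      linarith
  have hψlb : ∀ x ∈ K, ∀ ξ : E, ⟪ξ, x⟫ - f x ≤ ψ ξ := by
    intro x hx ξ
    have h := hψge ξ x hx
    simp only [hg_def] at h
    nlinarith [hwnonneg (‖ξ - G x‖ ^ 2) (by positivity)]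
  -- the ball CB
  set CB : Set E := Metric.closedBall (0 : E) M with hCB_def
  have hCBcompact : IsCompact CB := isCompact_closedBall 0 M
  have hCBconvex : Convex ℝ CB := convex_closedBall 0 M
  have hCBnorm : ∀ ξ ∈ CB, ‖ξ‖ ≤ M := by
    intro ξ hξ
    simpa [hCB_def, mem_closedBall_zero_iff] using hξ
  have hGCB : ∀ x ∈ K, G x ∈ CB := by
    intro x hx
    simp only [hCB_def, mem_closedBall_zero_iff]
    exact hGM x hx
  have hCBne : CB.Nonempty := ⟨0, by simp [hCB_def, Metric.mem_closedBall]; positivity⟩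
  -- ψ is Lipschitz on CB
  have hψlip : ∀ ξ ∈ CB, ∀ ξ' ∈ CB, ψ ξ - ψ ξ' ≤ (N + 4 * M / R) * ‖ξ - ξ'‖ := by
    intro ξ hξ ξ' hξ'
    obtain ⟨y₀, hy₀K, hmax, heq⟩ := hψatt ξ
    have h1 : ψ ξ = g y₀ ξ := heq
    have h2 : g y₀ ξ' ≤ ψ ξ' := hψge ξ' y₀ hy₀K
    have hinner : ⟪ξ, y₀⟫ - ⟪ξ', y₀⟫ ≤ N * ‖ξ - ξ'‖ := by
      have he : ⟪ξ, y₀⟫ - ⟪ξ', y₀⟫ = ⟪ξ - ξ', y₀⟫ := by rw [inner_sub_left]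
      rw [he]
      calc ⟪ξ - ξ', y₀⟫ ≤ ‖ξ - ξ'‖ * ‖y₀‖ := real_inner_le_norm _ _
        _ ≤ ‖ξ - ξ'‖ * N := mul_le_mul_of_nonneg_left (hNy y₀ hy₀K) (norm_nonneg _)
        _ = N * ‖ξ - ξ'‖ := mul_comm _ _
    have ha : ‖ξ - G y₀‖ ≤ 2 * M := by
      calc ‖ξ - G y₀‖ ≤ ‖ξ‖ + ‖G y₀‖ := norm_sub_le _ _
        _ ≤ 2 * M := by linarith [hCBnorm ξ hξ, hGM y₀ hy₀K]
    have ha' : ‖ξ' - G y₀‖ ≤ 2 * M := by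
      calc ‖ξ' - G y₀‖ ≤ ‖ξ'‖ + ‖G y₀‖ := norm_sub_le _ _
        _ ≤ 2 * M := by linarith [hCBnorm ξ' hξ', hGM y₀ hy₀K]
    have hq : |‖ξ - G y₀‖ ^ 2 - ‖ξ' - G y₀‖ ^ 2| ≤ 4 * M * ‖ξ - ξ'‖ := by
      have h3 : |‖ξ - G y₀‖ - ‖ξ' - G y₀‖| ≤ ‖ξ - ξ'‖ := by
        have h3' := abs_norm_sub_norm_le (ξ - G y₀) (ξ' - G y₀)
        have he : ξ - G y₀ - (ξ' - G y₀) = ξ - ξ' := by abel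
        rwa [he] at h3'
      have h4 : ‖ξ - G y₀‖ ^ 2 - ‖ξ' - G y₀‖ ^ 2
          = (‖ξ - G y₀‖ - ‖ξ' - G y₀‖) * (‖ξ - G y₀‖ + ‖ξ' - G y₀‖) := by ring
      rw [h4, abs_mul]
      have h5 : |‖ξ - G y₀‖ + ‖ξ' - G y₀‖| ≤ 4 * M := by
        rw [abs_of_nonneg (by positivity)]
        linarith
      calc |‖ξ - G y₀‖ - ‖ξ' - G y₀‖| * |‖ξ - G y₀‖ + ‖ξ' - G y₀‖|
          ≤ ‖ξ - ξ'‖ * (4 * M) := mul_le_mul h3 h5 (abs_nonneg _) (norm_nonneg _)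
        _ = 4 * M * ‖ξ - ξ'‖ := by ring
    have hwq : w (‖ξ - G y₀‖ ^ 2) - w (‖ξ' - G y₀‖ ^ 2) ≤ 4 * M / R * ‖ξ - ξ'‖ := by
      have h6 := hwlip (‖ξ - G y₀‖ ^ 2) (‖ξ' - G y₀‖ ^ 2)
      have h7 : |‖ξ - G y₀‖ ^ 2 - ‖ξ' - G y₀‖ ^ 2| / R ≤ 4 * M * ‖ξ - ξ'‖ / R := by gcongr
      have h8 : w (‖ξ - G y₀‖ ^ 2) - w (‖ξ' - G y₀‖ ^ 2)
          ≤ |w (‖ξ - G y₀‖ ^ 2) - w (‖ξ' - G y₀‖ ^ 2)| := le_abs_self _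
      calc w (‖ξ - G y₀‖ ^ 2) - w (‖ξ' - G y₀‖ ^ 2)
          ≤ |‖ξ - G y₀‖ ^ 2 - ‖ξ' - G y₀‖ ^ 2| / R := by linarith
        _ ≤ 4 * M * ‖ξ - ξ'‖ / R := h7
        _ = 4 * M / R * ‖ξ - ξ'‖ := by ring
    have hg' : g y₀ ξ - g y₀ ξ' ≤ (N + 4 * M / R) * ‖ξ - ξ'‖ := by
      simp only [hg_def]
      have : (⟪ξ, y₀⟫ - f y₀ + w (‖ξ - G y₀‖ ^ 2)) - (⟪ξ', y₀⟫ - f y₀ + w (‖ξ' - G y₀‖ ^ 2))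
          = (⟪ξ, y₀⟫ - ⟪ξ', y₀⟫) + (w (‖ξ - G y₀‖ ^ 2) - w (‖ξ' - G y₀‖ ^ 2)) := by ring
      have hdist : (N + 4 * M / R) * ‖ξ - ξ'‖ = N * ‖ξ - ξ'‖ + 4 * M / R * ‖ξ - ξ'‖ := by
        ring
      linarith [hinner, hwq, hdist]
    rw [h1]
    exact le_trans (sub_le_sub_left h2 _) hg'
  have hLnonneg : 0 ≤ N + 4 * M / R := by positivity
  have hψcont : ContinuousOn ψ CB := by
    rw [Metric.continuousOn_iff]
    intro ξ hξ ε hε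
    refine ⟨ε / (N + 4 * M / R + 1), by positivity, fun ξ' hξ' hd => ?_⟩
    rw [Real.dist_eq]
    rw [dist_eq_norm] at hd
    have h1 := hψlip ξ' hξ' ξ hξ
    have h2 := hψlip ξ hξ ξ' hξ'
    rw [norm_sub_rev] at h2
    have h3 : (N + 4 * M / R) * ‖ξ' - ξ‖ < ε := by
      have h4 : (N + 4 * M / R) * ‖ξ' - ξ‖
          ≤ (N + 4 * M / R) * (ε / (N + 4 * M / R + 1)) :=
        mul_le_mul_of_nonneg_left hd.le hLnonneg
      have h5 : (N + 4 * M / R) * (ε / (N + 4 * M / R + 1)) < ε := by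
        have hd0 : 0 < ε / (N + 4 * M / R + 1) := by positivity
        have hc : ε / (N + 4 * M / R + 1) * (N + 4 * M / R + 1) = ε :=
          div_mul_cancel₀ _ (by positivity)
        nlinarith [hd0, hc]
      linarith
    rw [abs_sub_lt_iff]
    constructor <;> linarith
  -- the extension F
  set F : E → ℝ := fun x => sSup ((fun ξ => ⟪ξ, x⟫ - ψ ξ) '' CB) with hF_def
  have hFcontaux : ∀ x : E, ContinuousOn (fun ξ => ⟪ξ, x⟫ - ψ ξ) CB := by
    intro x
    exact ((continuous_id.inner continuous_const).continuousOn).sub hψcont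
  have hFatt : ∀ x : E, ∃ ξ₀, ξ₀ ∈ CB ∧ (∀ ξ ∈ CB, ⟪ξ, x⟫ - ψ ξ ≤ ⟪ξ₀, x⟫ - ψ ξ₀) ∧
      F x = ⟪ξ₀, x⟫ - ψ ξ₀ := by
    intro x
    obtain ⟨ξ₀, hξ₀, hmax⟩ := hCBcompact.exists_isMaxOn hCBne (hFcontaux x)
    refine ⟨ξ₀, hξ₀, fun ξ hξ => hmax hξ, ?_⟩
    simp only [hF_def]
    exact IsGreatest.csSup_eq ⟨mem_image_of_mem _ hξ₀, by rintro r ⟨ξ, hξ, rfl⟩; exact hmax hξ⟩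
  choose Ξ hΞmem hΞmax hΞval using hFatt
  have hFge : ∀ x : E, ∀ ξ ∈ CB, ⟪ξ, x⟫ - ψ ξ ≤ F x := by
    intro x ξ hξ
    rw [hΞval x]
    exact hΞmax x ξ hξ
  -- uniqueness of the maximizer
  have huniq : ∀ x : E, ∀ ξ, ξ ∈ CB → F x = ⟪ξ, x⟫ - ψ ξ → ξ = Ξ x := by
    intro x ξ hξ hval
    by_contra hne
    have hmidCB : (2⁻¹ : ℝ) • ξ + (1 - (2⁻¹ : ℝ)) • Ξ x ∈ CB :=
      hCBconvex hξ (hΞmem x) (by norm_num) (by norm_num) (by norm_num)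
    have hstrict := hψstrict ξ (Ξ x) hne 2⁻¹ (by norm_num) (by norm_num)
    have hminner : ⟪(2⁻¹ : ℝ) • ξ + (1 - (2⁻¹ : ℝ)) • Ξ x, x⟫
        = 2⁻¹ * ⟪ξ, x⟫ + (1 - 2⁻¹) * ⟪Ξ x, x⟫ := by
      rw [inner_add_left, real_inner_smul_left, real_inner_smul_left]
    have hFmid := hFge x _ hmidCB
    have hvalΞ : F x = ⟪Ξ x, x⟫ - ψ (Ξ x) := hΞval x
    rw [hminner] at hFmid
    linarith only [hstrict, hFmid, hvalΞ, hval]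
  -- convexity of F
  have hFconvex : ConvexOn ℝ univ F := by
    refine ⟨convex_univ, fun x _ y _ a c ha hc hac => ?_⟩
    have hz := hΞval (a • x + c • y)
    have h1 : ⟪Ξ (a • x + c • y), a • x + c • y⟫
        = a * ⟪Ξ (a • x + c • y), x⟫ + c * ⟪Ξ (a • x + c • y), y⟫ := by
      rw [inner_add_right, real_inner_smul_right, real_inner_smul_right]
    have h2 := hFge x _ (hΞmem (a • x + c • y))
    have h3 := hFge y _ (hΞmem (a • x + c • y))
    have h4 := mul_le_mul_of_nonneg_left h2 ha
    have h5 := mul_le_mul_of_nonneg_left h3 hc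
    rw [mul_sub] at h4 h5
    have h6 : a * ψ (Ξ (a • x + c • y)) + c * ψ (Ξ (a • x + c • y))
        = ψ (Ξ (a • x + c • y)) := by rw [← add_mul, hac, one_mul]
    rw [smul_eq_mul, smul_eq_mul]
    linarith only [hz, h1, h4, h5, h6]
  -- F = f on K
  have hFK : ∀ x ∈ K, F x = f x := by
    intro x hx
    apply le_antisymm
    · have h1 := hψlb x hx (Ξ x)
      have h2 := hΞval x
      linarith only [h1, h2]
    · have h := hFge x (G x) (hGCB x hx)
      rw [hψG x hx] at h
      linarith only [h]
  -- continuity of the maximizer selection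
  have hΞcont : ∀ x : E, ∀ ε > (0:ℝ), ∃ δ > (0:ℝ), ∀ z : E, ‖z - x‖ < δ → ‖Ξ z - Ξ x‖ < ε := by
    intro x ε hε
    have hAclosed : IsClosed {ξ : E | ε ≤ ‖ξ - Ξ x‖} :=
      isClosed_le continuous_const ((continuous_id.sub continuous_const).norm)
    have hAcompact : IsCompact (CB ∩ {ξ : E | ε ≤ ‖ξ - Ξ x‖}) :=
      hCBcompact.inter_right hAclosed
    rcases (CB ∩ {ξ : E | ε ≤ ‖ξ - Ξ x‖}).eq_empty_or_nonempty with hAe | hAne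
    · refine ⟨1, one_pos, fun z _ => ?_⟩
      by_contra hge
      push_neg at hge
      have : Ξ z ∈ CB ∩ {ξ : E | ε ≤ ‖ξ - Ξ x‖} := ⟨hΞmem z, hge⟩
      rw [hAe] at this
      exact notMem_empty _ this
    · obtain ⟨ξ', hξ'A, hξ'max⟩ :=
        hAcompact.exists_isMaxOn hAne ((hFcontaux x).mono inter_subset_left)
      have hξ'CB : ξ' ∈ CB := hξ'A.1
      have hlt : ⟪ξ', x⟫ - ψ ξ' < F x := by
        rcases lt_or_eq_of_le (hFge x ξ' hξ'CB) with h | h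
        · exact h
        · exfalso
          have heqΞ := huniq x ξ' hξ'CB h.symm
          have hε' : ε ≤ ‖ξ' - Ξ x‖ := hξ'A.2
          rw [heqΞ, sub_self, norm_zero] at hε'
          linarith only [hε', hε]
      refine ⟨(F x - (⟪ξ', x⟫ - ψ ξ')) / (2 * M + 1),
        div_pos (by linarith only [hlt]) (by positivity), fun z hz => ?_⟩
      by_contra hge
      push_neg at hge
      have hΞzA : Ξ z ∈ CB ∩ {ξ : E | ε ≤ ‖ξ - Ξ x‖} := ⟨hΞmem z, hge⟩
      set δ : ℝ := (F x - (⟪ξ', x⟫ - ψ ξ')) / (2 * M + 1) with hδ_def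
      have hδpos : 0 < δ := div_pos (by linarith only [hlt]) (by positivity)
      have hb1 : ⟪Ξ z, z⟫ - ⟪Ξ z, x⟫ ≤ M * δ := by
        have he : ⟪Ξ z, z⟫ - ⟪Ξ z, x⟫ = ⟪Ξ z, z - x⟫ := (inner_sub_right _ _ _).symm
        rw [he]
        calc ⟪Ξ z, z - x⟫ ≤ ‖Ξ z‖ * ‖z - x‖ := real_inner_le_norm _ _
          _ ≤ M * δ :=
            mul_le_mul (hCBnorm _ (hΞmem z)) hz.le (norm_nonneg _) hMpos.le
      have hb2 : ⟪Ξ z, x⟫ - ψ (Ξ z) ≤ ⟪ξ', x⟫ - ψ ξ' := hξ'max hΞzA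
      have hb3 : ⟪Ξ x, x⟫ - ⟪Ξ x, z⟫ ≤ M * δ := by
        have he : ⟪Ξ x, x⟫ - ⟪Ξ x, z⟫ = ⟪Ξ x, x - z⟫ := (inner_sub_right _ _ _).symm
        rw [he]
        calc ⟪Ξ x, x - z⟫ ≤ ‖Ξ x‖ * ‖x - z‖ := real_inner_le_norm _ _
          _ ≤ M * δ := by
              rw [norm_sub_rev]
              exact mul_le_mul (hCBnorm _ (hΞmem x)) hz.le (norm_nonneg _) hMpos.le
      have hb4 : ⟪Ξ x, z⟫ - ψ (Ξ x) ≤ F z := hFge z (Ξ x) (hΞmem x)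
      have hvx : F x = ⟪Ξ x, x⟫ - ψ (Ξ x) := hΞval x
      have hvz : F z = ⟪Ξ z, z⟫ - ψ (Ξ z) := hΞval z
      have hkey : F x - (⟪ξ', x⟫ - ψ ξ') ≤ 2 * M * δ := by
        linarith only [hb1, hb2, hb3, hb4, hvx, hvz]
      have hcancel : δ * (2 * M + 1) = F x - (⟪ξ', x⟫ - ψ ξ') := by
        rw [hδ_def]
        exact div_mul_cancel₀ _ (by positivity)
      linarith only [hkey, hcancel, hδpos]
  -- F has derivative Ξ x at x
  have hFderiv : ∀ x : E, HasFDerivAt F (InnerProductSpace.toDual ℝ E (Ξ x)) x := by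
    intro x
    rw [hasFDerivAt_iff_isLittleO_nhds_zero]
    rw [Asymptotics.isLittleO_iff]
    intro c hc
    obtain ⟨δ, hδpos, hδ⟩ := hΞcont x c hc
    rw [Metric.eventually_nhds_iff]
    refine ⟨δ, hδpos, fun h hhd => ?_⟩
    rw [dist_zero_right] at hhd
    set z : E := x + h with hz_def
    have hzx : z - x = h := by rw [hz_def]; abel
    have hzd : ‖z - x‖ < δ := by rw [hzx]; exact hhd
    have hΞz := hδ z hzd
    have htd : (InnerProductSpace.toDual ℝ E (Ξ x)) (z - x) = ⟪Ξ x, z - x⟫ :=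
      InnerProductSpace.toDual_apply_apply
    have hlow : 0 ≤ F z - F x - ⟪Ξ x, z - x⟫ := by
      have h1 := hFge z (Ξ x) (hΞmem x)
      have h2 : F x = ⟪Ξ x, x⟫ - ψ (Ξ x) := hΞval x
      have h3 : ⟪Ξ x, z - x⟫ = ⟪Ξ x, z⟫ - ⟪Ξ x, x⟫ := inner_sub_right _ _ _
      linarith only [h1, h2, h3]
    have hup : F z - F x - ⟪Ξ x, z - x⟫ ≤ ⟪Ξ z - Ξ x, z - x⟫ := by
      have h1 := hFge x (Ξ z) (hΞmem z)
      have h2 : F z = ⟪Ξ z, z⟫ - ψ (Ξ z) := hΞval z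
      have h3 : ⟪Ξ z - Ξ x, z - x⟫ = ⟪Ξ z, z - x⟫ - ⟪Ξ x, z - x⟫ := inner_sub_left _ _ _
      have h4 : ⟪Ξ z, z - x⟫ = ⟪Ξ z, z⟫ - ⟪Ξ z, x⟫ := inner_sub_right _ _ _
      linarith only [h1, h2, h3, h4]
    have hbound : ⟪Ξ z - Ξ x, z - x⟫ ≤ c * ‖z - x‖ := by
      calc ⟪Ξ z - Ξ x, z - x⟫ ≤ ‖Ξ z - Ξ x‖ * ‖z - x‖ := real_inner_le_norm _ _
        _ ≤ c * ‖z - x‖ := mul_le_mul_of_nonneg_right hΞz.le (norm_nonneg _)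
    have hgoal : |F z - F x - ⟪Ξ x, z - x⟫| ≤ c * ‖z - x‖ := by
      rw [abs_le]
      constructor
      · have hcn : 0 ≤ c * ‖z - x‖ := by positivity
        linarith only [hlow, hcn]
      · linarith only [hup, hbound]
    rw [hzx] at hgoal
    simpa [hz_def, htd, Real.norm_eq_abs] using hgoal
  have hΞcont' : Continuous Ξ := by
    rw [Metric.continuous_iff]
    intro x ε hε
    obtain ⟨δ, hδpos, hδ⟩ := hΞcont x ε hε
    exact ⟨δ, hδpos, fun z hz => by
      rw [dist_eq_norm]
      exact hδ z (by rwa [← dist_eq_norm])⟩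
  have hgrad : ∀ x : E, gradient F x = Ξ x := by
    intro x
    have h : HasGradientAt F (Ξ x) x := by
      rw [hasGradientAt_iff_hasFDerivAt]
      exact hFderiv x
    exact h.gradient
  have hcontdiff : ContDiff ℝ 1 F := by
    rw [contDiff_one_iff_fderiv]
    refine ⟨fun x => (hFderiv x).differentiableAt, ?_⟩
    have he : fderiv ℝ F = fun x => InnerProductSpace.toDual ℝ E (Ξ x) :=
      funext fun x => (hFderiv x).fderiv
    rw [he]
    exact (InnerProductSpace.toDual ℝ E).continuous.comp hΞcont'
  refine ⟨F, hFconvex, hcontdiff, hFK, fun x hx => ?_⟩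
  rw [hgrad x]
  refine (huniq x (G x) (hGCB x hx) ?_).symm
  rw [hFK x hx, hψG x hx]
  ring

end Rev

end AuxiliaryLemmas

/-- Convex C¹ extension of 1-jets from compact subsets of ℝⁿ. -/
theorem convex_C1_extension_compact_Rn (n : ℕ)
    (K : Set (EuclideanSpace ℝ (Fin n))) (hK : IsCompact K)
    (f : EuclideanSpace ℝ (Fin n) → ℝ) (G : EuclideanSpace ℝ (Fin n) → EuclideanSpace ℝ (Fin n))
    (hf : ContinuousOn f K) (hG : ContinuousOn G K) :
    (∃ F : EuclideanSpace ℝ (Fin n) → ℝ,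
      ConvexOn ℝ univ F ∧ ContDiff ℝ 1 F ∧
      (∀ x ∈ K, F x = f x) ∧ (∀ x ∈ K, gradient F x = G x)) ↔
    ((∀ x ∈ K, ∀ y ∈ K, f x ≥ f y + ⟪G y, x - y⟫) ∧
     (∀ x ∈ K, ∀ y ∈ K, f x = f y + ⟪G y, x - y⟫ → G x = G y)) := by
  constructor
  · rintro ⟨F, hFc, hFd, hFf, hFG⟩
    have hd : Differentiable ℝ F := hFd.differentiable one_ne_zero
    constructor
    · intro x hx y hy
      have h := convex_grad_ineq hFc hd y x
      rw [hFG y hy, hFf x hx, hFf y hy] at h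
      linarith
    · intro x hx y hy heq
      have hsub : ∀ z, F x + ⟪G y, z - x⟫ ≤ F z := by
        intro z
        have h1 := convex_grad_ineq hFc hd y z
        rw [hFG y hy] at h1
        have h2 : ⟪G y, z - y⟫ = ⟪G y, z - x⟫ + ⟪G y, x - y⟫ := by
          rw [← inner_add_right]
          congr 1
          abel
        have h3 : F x = F y + ⟪G y, x - y⟫ := by
          rw [hFf x hx, hFf y hy]
          exact heq
        linarith
      have h := grad_eq_of_subgradient hd hsub
      rw [hFG x hx] at h
      exact h
  · rintro ⟨h1, h2⟩
    exact reverse_dir K hK f G hf hG h1 h2
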